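/- Let (N,v) be a monotonic TU game with veto player a and |N| ≥ 2. Then the least core value ε* satisfies ε* ≥ (v(N) − max{ v(S) : S ∋ a, |S| = |N|−1 }) / |N|. -/

import Mathlib

open Finset

/-- The strong ε-core of a TU game. -/
def epsCore {ι : Type*} [Fintype ι] [DecidableEq ι] (v : Finset ι → ℝ) (ε : ℝ) :
    Set (ι → ℝ) :=
  {x | (∑ i, x i) = v Finset.univ ∧
    ∀ S : Finset ι, S.Nonempty → S ≠ Finset.univ → v S + ε ≤ ∑ i ∈ S, x i}

/-- The least core value: the largest ε for which the strong ε-core is nonempty. -/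
noncomputable def lcv {ι : Type*} [Fintype ι] [DecidableEq ι] (v : Finset ι → ℝ) : ℝ :=
  sSup {ε : ℝ | (epsCore v ε).Nonempty}

/-- The "leave-one-out" coalitions containing `a`: those `S ∋ a` with `|S| = |N| − 1`. -/
def Pbar {ι : Type*} [Fintype ι] [DecidableEq ι] (a : ι) : Finset (Finset ι) :=
  Finset.univ.filter (fun S => a ∈ S ∧ S.card = Fintype.card ι - 1)

/-- For a monotonic veto game with `|N| ≥ 2`, the least core value satisfies
`ε* ≥ (v(N) − max{ v(S) : S ∋ a, |S| = |N| − 1 }) / |N|`. -/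
theorem stmt5 {ι : Type*} [Fintype ι] [DecidableEq ι] (v : Finset ι → ℝ) (a : ι)
    (hcard : 2 ≤ Fintype.card ι)
    (hempty : v ∅ = 0)
    (hveto : ∀ S : Finset ι, a ∉ S → v S = 0)
    (hmono : ∀ S T : Finset ι, S ⊆ T → v S ≤ v T)
    (hPbar : (Pbar a).Nonempty) :
    (v Finset.univ - (Pbar a).sup' hPbar v) / (Fintype.card ι : ℝ) ≤ lcv v := by
  set n := Fintype.card ι with hn
  have hn0 : (0:ℝ) < (n:ℝ) := by
    have : 0 < n := by omega
    exact_mod_cast this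
  set M := (Pbar a).sup' hPbar v with hM
  have hMle : M ≤ v Finset.univ :=
    Finset.sup'_le _ _ fun S _ => hmono S Finset.univ (Finset.subset_univ S)
  set ε := (v Finset.univ - M) / (n:ℝ) with hε
  have hε0 : 0 ≤ ε := div_nonneg (by linarith) hn0.le
  have hnε : (n:ℝ) * ε = v Finset.univ - M := by
    rw [hε]; field_simp [hn0.ne']
  set x : ι → ℝ := fun i => if i = a then v Finset.univ - ((n:ℝ) - 1) * ε else ε with hx
  have key : ∀ S : Finset ι, a ∈ S →
      ∑ i ∈ S, x i = v Finset.univ - ((n:ℝ) - (S.card:ℝ)) * ε := by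
    intro S haS
    rw [← Finset.add_sum_erase S x haS]
    have h1 : ∑ i ∈ S.erase a, x i = ((S.card:ℝ) - 1) * ε := by
      have hc : 1 ≤ S.card := Finset.card_pos.mpr ⟨a, haS⟩
      have hcong : ∀ i ∈ S.erase a, x i = ε := by
        intro i hi
        simp only [hx]
        rw [if_neg (Finset.ne_of_mem_erase hi)]
      rw [Finset.sum_congr rfl hcong, Finset.sum_const, nsmul_eq_mul,
        Finset.card_erase_of_mem haS, Nat.cast_sub hc]
      norm_num
    rw [h1]
    simp only [hx, if_pos rfl]
    ring
  have hmem : x ∈ epsCore v ε := by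
    constructor
    · have h := key Finset.univ (Finset.mem_univ a)
      rw [Finset.card_univ, ← hn] at h
      simpa using h
    · intro S hS hSne
      by_cases haS : a ∈ S
      · obtain ⟨i, hi⟩ : ∃ i, i ∉ S := by
          by_contra h
          push_neg at h
          exact hSne (Finset.eq_univ_iff_forall.mpr h)
        have hSsub : S ⊆ Finset.univ.erase i :=
          fun j hj => Finset.mem_erase.mpr ⟨fun e => hi (e ▸ hj), Finset.mem_univ j⟩
        have hTmem : Finset.univ.erase i ∈ Pbar a := by
          simp only [Pbar, Finset.mem_filter, Finset.mem_univ, true_and]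
          refine ⟨Finset.mem_erase.mpr ⟨by intro e; subst e; exact hi haS, Finset.mem_univ a⟩, ?_⟩
          rw [Finset.card_erase_of_mem (Finset.mem_univ i), Finset.card_univ]
        have hvS : v S ≤ M :=
          le_trans (hmono _ _ hSsub) (Finset.le_sup' v hTmem)
        have hs1 : (1:ℝ) ≤ (S.card:ℝ) := by
          exact_mod_cast Finset.card_pos.mpr hS
        rw [key S haS]
        nlinarith [mul_nonneg (sub_nonneg.mpr hs1) hε0]
      · have hsum : ∑ i ∈ S, x i = (S.card:ℝ) * ε := by
          have hcong : ∀ i ∈ S, x i = ε := by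
            intro i hi
            simp only [hx]
            rw [if_neg (by intro e; subst e; exact haS hi)]
          rw [Finset.sum_congr rfl hcong, Finset.sum_const, nsmul_eq_mul]
        have hs1 : (1:ℝ) ≤ (S.card:ℝ) := by
          exact_mod_cast Finset.card_pos.mpr hS
        rw [hveto S haS, hsum, zero_add]
        exact le_mul_of_one_le_left hε0 hs1
  have hbdd : BddAbove {ε : ℝ | (epsCore v ε).Nonempty} := by
    refine ⟨(v Finset.univ - v {a} - v (Finset.univ.erase a)) / 2, fun e he => ?_⟩
    obtain ⟨y, hy1, hy2⟩ := he
    have hane : ({a} : Finset ι) ≠ Finset.univ := by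
      intro h
      have := Finset.card_univ (α := ι)
      rw [← h, Finset.card_singleton] at this
      omega
    have h1 := hy2 {a} ⟨a, Finset.mem_singleton_self a⟩ hane
    have hene : (Finset.univ.erase a).Nonempty := by
      rw [← Finset.card_pos, Finset.card_erase_of_mem (Finset.mem_univ a), Finset.card_univ]
      omega
    have h2 := hy2 (Finset.univ.erase a) hene (by
      intro h
      have h' := Finset.notMem_erase a (Finset.univ : Finset ι)
      rw [h] at h'
      exact h' (Finset.mem_univ a))
    have h3 : y a + ∑ i ∈ Finset.univ.erase a, y i = ∑ i, y i :=
      Finset.add_sum_erase Finset.univ y (a := a) (Finset.mem_univ a)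
    rw [hy1] at h3
    rw [Finset.sum_singleton] at h1
    linarith
  calc (v Finset.univ - M) / (n:ℝ) = ε := rfl
    _ ≤ lcv v := le_csSup hbdd ⟨x, hmem⟩
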